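/- Let G be a connected finite simple graph on vertex set V with at least one edge and spectral radius ρ (so ρ ≥ 1), and let μ = N(0,1) be the standard Gaussian measure. Fix vertices i and j. Then for almost every ω in the i.i.d. noise field, limsup_{t→∞} (1/t)·M_t^{(i,j)}(ω) ≤ sup_{β ∈ (0,1]} √(2β·(H(β) + β·log ρ)) (the limsup taken over t at least the graph distance from j to i). -/

import Mathlib

open MeasureTheory ProbabilityTheory Filter

/-- A walk-with-self-loops of length `t` from `j` to `i` in the simple graph `G`. -/
def IsWalkWithLoops {V : Type*} (G : SimpleGraph V) (t : ℕ) (j i : V)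
    (p : Fin (t + 1) → V) : Prop :=
  p 0 = j ∧ p (Fin.last t) = i ∧
    ∀ k : Fin t, p k.succ = p k.castSucc ∨ G.Adj (p k.castSucc) (p k.succ)

/-- The spectral radius of a finite simple graph: the `ℓ² → ℓ²` operator norm of its
adjacency matrix. -/
noncomputable def specRad {V : Type*} [Fintype V] [DecidableEq V] (G : SimpleGraph V)
    [DecidableRel G.Adj] : ℝ :=
  ‖LinearMap.toContinuousLinearMap (Matrix.toEuclideanLin (G.adjMatrix ℝ))‖

/-- The binary entropy function `H(β) = −β log β − (1−β) log(1−β)`. -/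
noncomputable def binH (β : ℝ) : ℝ :=
  -(β * Real.log β) - (1 - β) * Real.log (1 - β)

/-- `M_t^{(i,j)}(ω)` for a noise field `ω : ℕ × V × V → ℝ`. -/
noncomputable def pathMaxInf {V : Type*} [Fintype V] [DecidableEq V] (G : SimpleGraph V)
    (t : ℕ) (j i : V) (ω : ℕ × V × V → ℝ) : ℝ :=
  ⨆ p : {p : Fin (t + 1) → V // IsWalkWithLoops G t j i p},
    ∑ k : Fin t, if p.1 k.castSucc = p.1 k.succ then 0
      else ω ((k : ℕ), p.1 k.castSucc, p.1 k.succ)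


open Real
open scoped ENNReal NNReal Matrix.Norms.L2Operator
set_option linter.unusedSectionVars false


lemma aux_gauss_density_eq (l x : ℝ) :
    rexp (l ^ 2 / 2) * rexp (-(1/2) * (x - l) ^ 2) = rexp (l * x) * rexp (-x ^ 2 / 2) := by
  rw [← Real.exp_add, ← Real.exp_add]; congr 1; ring

lemma aux_integrable_exp_gauss (l : ℝ) :
    Integrable (fun x => rexp (l * x)) (gaussianReal 0 1) := by
  rw [gaussianReal_of_var_ne_zero _ one_ne_zero]
  rw [integrable_withDensity_iff (measurable_gaussianPDF _ _)
    (ae_of_all _ fun x => by rw [gaussianPDF_def]; exact ENNReal.ofReal_lt_top)]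
  have h : ∀ x : ℝ, rexp (l * x) * (gaussianPDF 0 1 x).toReal
      = ((√(2 * π))⁻¹ * rexp (l ^ 2 / 2)) * rexp (-(1/2) * (x - l) ^ 2) := by
    intro x
    rw [gaussianPDF_def, ENNReal.toReal_ofReal (gaussianPDFReal_nonneg _ _ _)]
    simp only [gaussianPDFReal, NNReal.coe_one, mul_one, sub_zero]
    linear_combination -((√(2 * π))⁻¹ * aux_gauss_density_eq l x)
  simp only [h]
  exact ((integrable_exp_neg_mul_sq (by norm_num : (0:ℝ) < 1/2)).comp_sub_right l).const_mul _

lemma aux_integral_exp_gauss (l : ℝ) :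
    ∫ x, rexp (l * x) ∂(gaussianReal 0 1) = rexp (l ^ 2 / 2) := by
  rw [gaussianReal_of_var_ne_zero _ one_ne_zero]
  have hd : gaussianPDF 0 1 = fun x => ((gaussianPDFReal 0 1 x).toNNReal : ℝ≥0∞) := rfl
  rw [hd, integral_withDensity_eq_integral_smul
    ((measurable_gaussianPDFReal 0 1).real_toNNReal)]
  have h : ∀ x : ℝ, (gaussianPDFReal 0 1 x).toNNReal • rexp (l * x)
      = rexp (l ^ 2 / 2) * ((√(2 * π))⁻¹ * rexp (-(1/2) * (x - l) ^ 2)) := by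
    intro x
    rw [NNReal.smul_def, smul_eq_mul, Real.coe_toNNReal _ (gaussianPDFReal_nonneg _ _ _)]
    simp only [gaussianPDFReal, NNReal.coe_one, mul_one, sub_zero]
    linear_combination -((√(2 * π))⁻¹ * aux_gauss_density_eq l x)
  simp only [h]
  rw [integral_const_mul, integral_const_mul]
  have h2 : ∫ x : ℝ, rexp (-(1/2) * (x - l) ^ 2) = √(2*π) := by
    rw [integral_sub_right_eq_self (fun x => rexp (-(1/2) * x ^ 2)) l, integral_gaussian,
      show π / (1/2) = 2 * π by ring]
  rw [h2, inv_mul_cancel₀ (by positivity), mul_one]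


section Walks
variable {V : Type*} [Fintype V] [DecidableEq V] (G : SimpleGraph V) [DecidableRel G.Adj]

/-- number of non-loop steps -/
def sCount {V : Type*} [DecidableEq V] {t : ℕ} (p : Fin (t + 1) → V) : ℕ :=
  (Finset.univ.filter (fun k : Fin t => p k.castSucc ≠ p k.succ)).card

noncomputable def walkSet (t : ℕ) (j i : V) : Finset (Fin (t + 1) → V) := by
  classical exact Finset.univ.filter (fun p => IsWalkWithLoops G t j i p)

omit [DecidableEq V] [DecidableRel G.Adj] in
lemma mem_walkSet {t : ℕ} {j i : V} {p : Fin (t + 1) → V} :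
    p ∈ walkSet G t j i ↔ IsWalkWithLoops G t j i p := by
  simp [walkSet]

lemma walkSum_eq_pow_apply (t : ℕ) (j i : V) (x : ℝ) :
    ∑ p ∈ walkSet G t j i, x ^ sCount p
      = (((1 : Matrix V V ℝ) + x • G.adjMatrix ℝ) ^ t) j i := by
  induction t generalizing j with
  | zero =>
    rw [pow_zero]
    by_cases hji : j = i
    · subst hji
      have : walkSet G 0 j j = {fun _ => j} := by
        ext p
        simp only [mem_walkSet, IsWalkWithLoops, Finset.mem_singleton]
        constructor
        · rintro ⟨h0, -, -⟩
          funext k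
          have hk : k = 0 := by have := k.isLt; ext; omega
          rw [hk, h0]
        · rintro rfl
          exact ⟨rfl, rfl, fun k => k.elim0⟩
      rw [this, Finset.sum_singleton]
      have : sCount (fun _ : Fin 1 => j) = 0 := by
        simp [sCount]
      rw [this, pow_zero, Matrix.one_apply_eq]
    · have : walkSet G 0 j i = ∅ := by
        ext p
        simp only [mem_walkSet, IsWalkWithLoops, Finset.notMem_empty, iff_false]
        rintro ⟨h0, hl, -⟩
        exact hji (by rw [← h0, ← hl]; rfl)
      rw [this, Finset.sum_empty, Matrix.one_apply_ne hji]
  | succ t ih =>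
    classical
    set M : Matrix V V ℝ := (1 : Matrix V V ℝ) + x • G.adjMatrix ℝ with hM
    have hMapp : ∀ u v : V, M u v = if u = v then 1 else if G.Adj u v then x else 0 := by
      intro u v
      simp only [hM, Matrix.add_apply, Matrix.one_apply, Matrix.smul_apply,
        SimpleGraph.adjMatrix_apply, smul_eq_mul]
      by_cases huv : u = v
      · subst huv; simp [G.irrefl]
      · simp [huv]
    have stepA : ∑ p ∈ walkSet G (t + 1) j i, x ^ sCount p
        = ∑ q ∈ Finset.univ.filter (fun q : Fin (t + 1) → V =>
            (q 0 = j ∨ G.Adj j (q 0)) ∧ IsWalkWithLoops G t (q 0) i q),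
          (if j = q 0 then 1 else x) * x ^ sCount q := by
      refine Finset.sum_nbij' (fun p => Fin.tail p) (fun q => Fin.cons j q) ?_ ?_ ?_ ?_ ?_
      · intro p hp
        rw [mem_walkSet] at hp
        obtain ⟨h0, hl, hstep⟩ := hp
        have h1 := hstep 0
        rw [Fin.castSucc_zero, h0] at h1
        refine Finset.mem_filter.mpr ⟨Finset.mem_univ _, ?_, ?_, ?_, ?_⟩
        · exact h1
        · rfl
        · show p (Fin.last t).succ = i
          rw [Fin.succ_last]; exact hl
        · intro k
          have h2 := hstep k.succ
          show p k.succ.succ = p k.castSucc.succ ∨ G.Adj (p k.castSucc.succ) (p k.succ.succ)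
          rwa [Fin.succ_castSucc]
      · intro q hq
        rw [Finset.mem_filter] at hq
        obtain ⟨-, hadj, h0, hl, hstep⟩ := hq
        rw [mem_walkSet]
        refine ⟨Fin.cons_zero _ _, ?_, ?_⟩
        · rw [show Fin.last (t+1) = (Fin.last t).succ from (Fin.succ_last t).symm,
            Fin.cons_succ]
          exact hl
        · intro k
          induction k using Fin.cases with
          | zero =>
            rw [Fin.castSucc_zero, Fin.cons_zero, Fin.cons_succ]
            exact hadj
          | succ k =>
            rw [← Fin.succ_castSucc, Fin.cons_succ, Fin.cons_succ]
            exact hstep k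
      · intro p hp
        rw [mem_walkSet] at hp
        rw [← hp.1]
        exact Fin.cons_self_tail p
      · intro q hq
        funext k
        simp [Fin.tail]
      · intro p hp
        rw [mem_walkSet] at hp
        have hcard : sCount p
            = ((if p 0 ≠ p (Fin.succ 0) then 1 else 0) + sCount (Fin.tail p)) := by
          simp only [sCount, Finset.card_filter, Fin.sum_univ_succ, Fin.tail,
            Fin.castSucc_zero, Fin.succ_castSucc]
          congr 1
          exact (Finset.card_filter _ _).symm
        rw [hcard, pow_add, hp.1]
        show x ^ _ * x ^ _ = (if j = Fin.tail p 0 then 1 else x) * x ^ sCount (Fin.tail p)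
        congr 1
        have ht0 : Fin.tail p 0 = p (Fin.succ 0) := rfl
        rw [ht0, ← hp.1]
        split_ifs with h1 h2
        · exact pow_one x
        · exact pow_zero x
        · exact absurd (not_not.mp h1) h2
    rw [stepA]
    have stepB := Finset.sum_fiberwise_of_maps_to (s := Finset.univ.filter
          (fun q : Fin (t + 1) → V =>
            (q 0 = j ∨ G.Adj j (q 0)) ∧ IsWalkWithLoops G t (q 0) i q))
        (t := (Finset.univ : Finset V)) (g := fun q => q 0)
        (fun q _ => Finset.mem_univ _)
        (f := fun q => (if j = q 0 then 1 else x) * x ^ sCount q)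
    rw [← stepB, pow_succ', Matrix.mul_apply]
    apply Finset.sum_congr rfl
    intro u _
    rw [← ih u]
    by_cases hu : u = j ∨ G.Adj j u
    · have hset : (Finset.univ.filter (fun q : Fin (t + 1) → V =>
          (q 0 = j ∨ G.Adj j (q 0)) ∧ IsWalkWithLoops G t (q 0) i q)).filter
            (fun q => q 0 = u) = walkSet G t u i := by
        ext q
        simp only [Finset.mem_filter, Finset.mem_univ, true_and, mem_walkSet]
        constructor
        · rintro ⟨⟨-, hw⟩, h0⟩
          rwa [h0] at hw
        · intro hw
          have h0 : q 0 = u := hw.1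
          refine ⟨⟨by rw [h0]; exact hu, by rw [h0]; exact hw⟩, h0⟩
      rw [hset, Finset.mul_sum]
      apply Finset.sum_congr rfl
      intro q hq
      rw [mem_walkSet] at hq
      rw [hq.1, hMapp]
      congr 1
      by_cases hju : j = u
      · simp [hju]
      · have hadj : G.Adj j u := hu.resolve_left (fun h => hju h.symm)
        simp [hju, hadj]
    · have hset : (Finset.univ.filter (fun q : Fin (t + 1) → V =>
          (q 0 = j ∨ G.Adj j (q 0)) ∧ IsWalkWithLoops G t (q 0) i q)).filter
            (fun q => q 0 = u) = ∅ := by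
        ext q
        simp only [Finset.mem_filter, Finset.mem_univ, true_and, Finset.notMem_empty,
          iff_false, not_and]
        rintro ⟨hadj, -⟩ h0
        rw [h0] at hadj
        exact hu hadj
      rw [hset, Finset.sum_empty]
      have : M j u = 0 := by
        rw [hMapp]
        push_neg at hu
        rw [if_neg (fun h => hu.1 h.symm), if_neg hu.2]
      rw [this, zero_mul]
end Walks


section Norms
variable {V : Type*} [Fintype V] [DecidableEq V]

lemma l2norm_eq (A : Matrix V V ℝ) :
    ‖A‖ = ‖LinearMap.toContinuousLinearMap (Matrix.toEuclideanLin A)‖ := rfl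

lemma specRad_eq_norm (G : SimpleGraph V) [DecidableRel G.Adj] :
    specRad G = ‖G.adjMatrix ℝ‖ := rfl

lemma entry_le_l2norm (B : Matrix V V ℝ) (j i : V) : B j i ≤ ‖B‖ := by
  have hy : Matrix.toEuclideanLin B (EuclideanSpace.single i (1:ℝ)) j = B j i := by
    rw [Matrix.toEuclideanLin_apply]
    show (B.mulVec ((WithLp.equiv 2 (V → ℝ)) (EuclideanSpace.single i (1:ℝ)))) j = B j i
    have : (WithLp.equiv 2 (V → ℝ)) (EuclideanSpace.single i (1:ℝ)) = Pi.single i 1 := rfl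
    rw [this, Matrix.mulVec_single]
    simp
  set y : EuclideanSpace ℝ V := Matrix.toEuclideanLin B (EuclideanSpace.single i (1:ℝ)) with hyd
  have h1 : B j i ≤ ‖y‖ := by
    rw [← hy]
    calc y j ≤ |y j| := le_abs_self _
    _ = √((y j)^2) := (Real.sqrt_sq_eq_abs _).symm
    _ ≤ ‖y‖ := by
        rw [EuclideanSpace.norm_eq]
        apply Real.sqrt_le_sqrt
        have := Finset.single_le_sum (f := fun v => ‖y v‖^2)
          (fun v _ => sq_nonneg _) (Finset.mem_univ j)
        simpa [Real.norm_eq_abs, sq_abs] using this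
  refine h1.trans ?_
  have h2 : ‖y‖ = ‖LinearMap.toContinuousLinearMap (Matrix.toEuclideanLin B)
      (EuclideanSpace.single i (1:ℝ))‖ := rfl
  rw [h2]
  calc _ ≤ ‖LinearMap.toContinuousLinearMap (Matrix.toEuclideanLin B)‖
        * ‖EuclideanSpace.single i (1:ℝ)‖ := ContinuousLinearMap.le_opNorm _ _
  _ = ‖B‖ := by rw [EuclideanSpace.norm_single, norm_one, mul_one, ← l2norm_eq]

lemma one_le_specRad {G : SimpleGraph V} [DecidableRel G.Adj]
    (hE : G.edgeSet.Nonempty) : 1 ≤ specRad G := by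
  obtain ⟨e, he⟩ := hE
  induction e with
  | _ u v =>
    rw [SimpleGraph.mem_edgeSet] at he
    have := entry_le_l2norm (G.adjMatrix ℝ) u v
    rw [SimpleGraph.adjMatrix_apply, if_pos he] at this
    rwa [specRad_eq_norm]

lemma pow_entry_le (hV : Nonempty V) (A : Matrix V V ℝ) (x : ℝ) (hx : 0 ≤ x)
    {t : ℕ} (ht : 1 ≤ t) (j i : V) :
    (((1 : Matrix V V ℝ) + x • A) ^ t) j i ≤ (1 + x * ‖A‖) ^ t := by
  have hnt : Nontrivial (EuclideanSpace ℝ V) := by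
    refine inferInstanceAs (Nontrivial (PiLp 2 fun _ : V => ℝ))
  calc (((1 : Matrix V V ℝ) + x • A) ^ t) j i
      ≤ ‖((1 : Matrix V V ℝ) + x • A) ^ t‖ := entry_le_l2norm _ _ _
  _ ≤ ‖(1 : Matrix V V ℝ) + x • A‖ ^ t := norm_pow_le' _ ht
  _ ≤ (1 + x * ‖A‖) ^ t := by
      apply pow_le_pow_left₀ (norm_nonneg _)
      calc ‖(1 : Matrix V V ℝ) + x • A‖ ≤ ‖(1 : Matrix V V ℝ)‖ + ‖x • A‖ := norm_add_le _ _
      _ = 1 + x * ‖A‖ := by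
          rw [norm_smul, Real.norm_eq_abs, abs_of_nonneg hx]
          congr 1
          have : ‖(1 : Matrix V V ℝ)‖
              = ‖LinearMap.toContinuousLinearMap (Matrix.toEuclideanLin
                  (1 : Matrix V V ℝ))‖ := rfl
          rw [this]
          have h1 : LinearMap.toContinuousLinearMap (Matrix.toEuclideanLin
              (1 : Matrix V V ℝ)) = ContinuousLinearMap.id ℝ (EuclideanSpace ℝ V) := by
            ext w
            simp [Matrix.toEuclideanLin_apply]
          rw [h1]
          exact ContinuousLinearMap.norm_id
end Norms

section Count
variable {V : Type*} [Fintype V] [DecidableEq V] (G : SimpleGraph V) [DecidableRel G.Adj]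

lemma card_walk_le (hV : Nonempty V) (hρ : 1 ≤ specRad G)
    {t s : ℕ} (ht : 1 ≤ t) (hs1 : 1 ≤ s) (hst : s ≤ t) (j i : V) :
    (((walkSet G t j i).filter (fun p => sCount p = s)).card : ℝ)
      ≤ Real.exp (t * binH ((s:ℝ)/t) + s * Real.log (specRad G)) := by
  classical
  set ρ := specRad G with hρdef
  have hρ0 : (0:ℝ) < ρ := lt_of_lt_of_le one_pos hρ
  set N : ℝ := (((walkSet G t j i).filter (fun p => sCount p = s)).card : ℝ) with hN
  have key : ∀ x : ℝ, 0 < x → N * x ^ s ≤ (1 + x * ρ) ^ t := by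
    intro x hx
    have h1 : N * x ^ s = ∑ p ∈ (walkSet G t j i).filter (fun p => sCount p = s),
        x ^ sCount p := by
      rw [Finset.sum_congr rfl (fun p hp => by
        rw [(Finset.mem_filter.mp hp).2]), Finset.sum_const, nsmul_eq_mul]
    have h2 : ∑ p ∈ (walkSet G t j i).filter (fun p => sCount p = s), x ^ sCount p
        ≤ ∑ p ∈ walkSet G t j i, x ^ sCount p :=
      Finset.sum_le_sum_of_subset_of_nonneg (Finset.filter_subset _ _)
        (fun p _ _ => pow_nonneg hx.le _)
    rw [h1]
    refine h2.trans ?_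
    rw [walkSum_eq_pow_apply]
    rw [hρdef, specRad_eq_norm]
    exact pow_entry_le hV _ x hx.le ht j i
  have ht0 : (0:ℝ) < (t:ℝ) := by exact_mod_cast ht
  by_cases hst' : s = t
  · subst hst'
    have hβ1 : (s:ℝ)/(s:ℝ) = 1 := div_self (ne_of_gt ht0)
    rw [hβ1]
    have hbH1 : binH 1 = 0 := by simp [binH]
    rw [hbH1, mul_zero, zero_add, Real.exp_nat_mul, Real.exp_log hρ0]
    have htend : Filter.Tendsto (fun δ : ℝ => (ρ + δ) ^ s) (nhdsWithin 0 (Set.Ioi 0))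
        (nhds (ρ ^ s)) := by
      have hc : Continuous (fun δ : ℝ => (ρ + δ) ^ s) :=
        (continuous_const.add continuous_id).pow s
      have := (hc.tendsto 0).mono_left (nhdsWithin_le_nhds (s := Set.Ioi (0:ℝ)))
      simpa using this
    refine ge_of_tendsto htend ?_
    filter_upwards [self_mem_nhdsWithin] with δ hδ
    rw [Set.mem_Ioi] at hδ
    have hk := key (1/δ) (by positivity)
    have hpow : (1/δ) ^ s * δ ^ s = 1 := by
      rw [← mul_pow, one_div_mul_cancel (ne_of_gt hδ), one_pow]
    calc N = N * ((1/δ) ^ s * δ ^ s) := by rw [hpow, mul_one]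
    _ = N * (1/δ) ^ s * δ ^ s := by ring
    _ ≤ (1 + (1/δ) * ρ) ^ s * δ ^ s := by
        apply mul_le_mul_of_nonneg_right hk (by positivity)
    _ = ((1 + (1/δ) * ρ) * δ) ^ s := by rw [mul_pow]
    _ = (ρ + δ) ^ s := by
        congr 1
        field_simp
        ring
  · have hstlt : s < t := lt_of_le_of_ne hst hst'
    set β : ℝ := (s:ℝ)/t with hβdef
    have hβ0 : 0 < β := by positivity
    have hβ1 : β < 1 := by
      rw [hβdef, div_lt_one ht0]
      exact_mod_cast hstlt
    have hb : (0:ℝ) < 1 - β := by linarith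
    set x : ℝ := β / ((1 - β) * ρ) with hxdef
    have hx0 : 0 < x := by positivity
    have hk := key x hx0
    have h1 : 1 + x * ρ = (1 - β)⁻¹ := by
      rw [hxdef]
      field_simp
      ring
    have htβ : (t:ℝ) * β = s := by
      rw [hβdef, mul_div_cancel₀]
      exact ne_of_gt ht0
    have hquot : N ≤ (1 + x * ρ) ^ t / x ^ s := by
      rw [le_div_iff₀ (by positivity)]
      exact hk
    refine hquot.trans (le_of_eq ?_)
    have hxe : x = Real.exp (Real.log β - (Real.log (1 - β) + Real.log ρ)) := by
      rw [Real.exp_sub, Real.exp_add, Real.exp_log hβ0, Real.exp_log hb, Real.exp_log hρ0]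
    rw [h1]
    have h1e : (1 - β)⁻¹ = Real.exp (-(Real.log (1 - β))) := by
      rw [Real.exp_neg, Real.exp_log hb]
    rw [h1e, hxe, ← Real.exp_nat_mul, ← Real.exp_nat_mul, ← Real.exp_sub]
    congr 1
    simp only [binH]
    linear_combination (Real.log β - Real.log (1 - β)) * htβ
end Count

section Prob
variable {V : Type*} [Fintype V] [DecidableEq V]

def walkX {V : Type*} [DecidableEq V] (t : ℕ) (p : Fin (t + 1) → V) (ω : ℕ × V × V → ℝ) : ℝ :=
  ∑ k : Fin t, if p k.castSucc = p k.succ then 0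
    else ω ((k : ℕ), p k.castSucc, p k.succ)


lemma exists_walk_ge (G : SimpleGraph V) {t : ℕ} {j i : V} {ω : ℕ × V × V → ℝ} {r : ℝ}
    (hr : 0 < r) (h : r ≤ pathMaxInf G t j i ω) :
    ∃ p ∈ walkSet G t j i, r ≤ walkX t p ω := by
  have hrw : pathMaxInf G t j i ω
      = ⨆ p : {p : Fin (t + 1) → V // IsWalkWithLoops G t j i p}, walkX t p.1 ω := rfl
  rw [hrw] at h
  by_cases hne : Nonempty {p : Fin (t + 1) → V // IsWalkWithLoops G t j i p}
  · obtain ⟨p0, hp0⟩ := Finite.exists_max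
      (fun p : {p : Fin (t + 1) → V // IsWalkWithLoops G t j i p} => walkX t p.1 ω)
    refine ⟨p0.1, mem_walkSet _ |>.mpr p0.2, le_trans h ?_⟩
    exact ciSup_le hp0
  · exfalso
    haveI hie : IsEmpty {p : Fin (t + 1) → V // IsWalkWithLoops G t j i p} :=
      not_nonempty_iff.mp hne
    rw [Real.iSup_of_isEmpty] at h
    exact absurd (lt_of_lt_of_le hr h) (lt_irrefl 0)

lemma walkX_eq_zero {t : ℕ} {p : Fin (t + 1) → V} (h : sCount p = 0)
    (ω : ℕ × V × V → ℝ) : walkX t p ω = 0 := by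
  rw [walkX]
  apply Finset.sum_eq_zero
  intro k _
  have : p k.castSucc = p k.succ := by
    by_contra hne
    have : k ∈ Finset.univ.filter (fun k : Fin t => p k.castSucc ≠ p k.succ) := by
      simp [hne]
    rw [sCount, Finset.card_eq_zero] at h
    rw [h] at this
    exact absurd this (Finset.notMem_empty k)
  rw [if_pos this]

variable (P : Measure (ℕ × V × V → ℝ)) [IsProbabilityMeasure P]

lemma chernoff_walk
    (hindep : ProbabilityTheory.iIndepFun
      (fun c (ω : ℕ × V × V → ℝ) => ω c) P)
    (hlaw : ∀ c : ℕ × V × V, P.map (fun ω => ω c) = gaussianReal 0 1)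
    {t : ℕ} (p : Fin (t + 1) → V) (hs : 1 ≤ sCount p) {r : ℝ} (hr : 0 < r) :
    (P {ω | r ≤ walkX t p ω}).toReal ≤ rexp (-(r ^ 2 / (2 * sCount p))) := by
  classical
  set s : ℕ := sCount p with hsdef
  set Sp : Finset (ℕ × V × V) :=
    (Finset.univ.filter (fun k : Fin t => p k.castSucc ≠ p k.succ)).image
      (fun k : Fin t => ((k : ℕ), p k.castSucc, p k.succ)) with hSp
  have hinj : Set.InjOn (fun k : Fin t => ((k : ℕ), p k.castSucc, p k.succ))
      (Finset.univ.filter (fun k : Fin t => p k.castSucc ≠ p k.succ)) := by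
    intro k1 _ k2 _ h
    have : (k1 : ℕ) = (k2 : ℕ) := congrArg Prod.fst h
    exact Fin.ext this
  have hcard : Sp.card = s := by
    rw [hSp, Finset.card_image_of_injOn hinj, hsdef, sCount]
  have hXeq : walkX t p = ∑ c ∈ Sp, (fun ω : (ℕ × V × V) → ℝ => ω c) := by
    funext ω
    rw [Finset.sum_apply, walkX, hSp, Finset.sum_image hinj, Finset.sum_filter]
    apply Finset.sum_congr rfl
    intro k _
    by_cases h : p k.castSucc = p k.succ <;> simp [h]
  set l : ℝ := r / s with hldef
  have hs0 : (0:ℝ) < (s:ℝ) := by exact_mod_cast hs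
  have hl : 0 ≤ l := by positivity
  have hmeas : ∀ c : ℕ × V × V, Measurable (fun ω : (ℕ × V × V) → ℝ => ω c) :=
    fun c => measurable_pi_apply c
  have hint : ∀ c : ℕ × V × V, Integrable (fun ω : (ℕ × V × V) → ℝ => rexp (l * ω c)) P := by
    intro c
    have h1 : Integrable (fun x : ℝ => rexp (l * x)) (P.map (fun ω => ω c)) := by
      rw [hlaw c]; exact aux_integrable_exp_gauss l
    exact (integrable_map_measure
      ((measurable_const.mul measurable_id).exp).aestronglyMeasurable
      (hmeas c).aemeasurable).mp h1
  have hmgf_one : ∀ c : ℕ × V × V, mgf (fun ω : (ℕ × V × V) → ℝ => ω c) P l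
      = rexp (l ^ 2 / 2) := by
    intro c
    have hg : Measurable fun x : ℝ => rexp (l * x) := by fun_prop
    rw [mgf]
    have him := integral_map (μ := P) (φ := fun ω : (ℕ × V × V) → ℝ => ω c)
      (f := fun x : ℝ => rexp (l * x)) (hmeas c).aemeasurable hg.aestronglyMeasurable
    rw [hlaw c, aux_integral_exp_gauss] at him
    exact him.symm
  have hmgf : mgf (∑ c ∈ Sp, (fun ω : (ℕ × V × V) → ℝ => ω c)) P l
      = rexp (l ^ 2 / 2) ^ s := by
    rw [ProbabilityTheory.iIndepFun.mgf_sum hindep hmeas Sp]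
    rw [Finset.prod_congr rfl (fun c _ => hmgf_one c), Finset.prod_const, hcard]
  have hintsum : Integrable
      (fun ω => rexp (l * (∑ c ∈ Sp, (fun ω : (ℕ × V × V) → ℝ => ω c)) ω)) P :=
    ProbabilityTheory.iIndepFun.integrable_exp_mul_sum hindep hmeas (fun c _ => hint c)
  have hch := ProbabilityTheory.measure_ge_le_exp_mul_mgf (X := ∑ c ∈ Sp,
    (fun ω : (ℕ × V × V) → ℝ => ω c)) (μ := P) r hl hintsum
  rw [hmgf] at hch
  rw [hXeq]
  refine hch.trans (le_of_eq ?_)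
  rw [← Real.exp_nat_mul, ← Real.exp_add]
  congr 1
  rw [hldef]
  field_simp
  ring

lemma prob_bound (G : SimpleGraph V) [DecidableRel G.Adj]
    (hindep : ProbabilityTheory.iIndepFun
      (fun c (ω : ℕ × V × V → ℝ) => ω c) P)
    (hlaw : ∀ c : ℕ × V × V, P.map (fun ω => ω c) = gaussianReal 0 1)
    (hV : Nonempty V) (hρ : 1 ≤ specRad G) (j i : V)
    {a c : ℝ} (ha : 0 < a) {t : ℕ} (ht : 1 ≤ t)
    (hexp : ∀ s : ℕ, 1 ≤ s → s ≤ t →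
      (t:ℝ) * binH ((s:ℝ)/t) + s * Real.log (specRad G) - (a * t) ^ 2 / (2 * s) ≤ -(c * t)) :
    (P {ω | a * t ≤ pathMaxInf G t j i ω}).toReal ≤ (t + 1) * rexp (-(c * t)) := by
  classical
  have ht0 : (0:ℝ) < t := by exact_mod_cast ht
  have hat : 0 < a * t := by positivity
  have hsub : {ω | a * t ≤ pathMaxInf G t j i ω}
      ⊆ ⋃ p ∈ walkSet G t j i, {ω | a * t ≤ walkX t p ω} := by
    intro ω hω
    obtain ⟨p, hp, hpr⟩ := exists_walk_ge G hat hω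
    exact Set.mem_biUnion hp hpr
  have h1 : P {ω | a * t ≤ pathMaxInf G t j i ω}
      ≤ ∑ p ∈ walkSet G t j i, P {ω | a * t ≤ walkX t p ω} :=
    (measure_mono hsub).trans (measure_biUnion_finset_le _ _)
  have hne : ∀ p ∈ walkSet G t j i, P {ω | a * t ≤ walkX t p ω} ≠ ⊤ :=
    fun p _ => measure_ne_top _ _
  have h2 : (P {ω | a * t ≤ pathMaxInf G t j i ω}).toReal
      ≤ ∑ p ∈ walkSet G t j i, (P {ω | a * t ≤ walkX t p ω}).toReal := by
    rw [← ENNReal.toReal_sum hne]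
    exact ENNReal.toReal_mono (ENNReal.sum_ne_top.mpr hne) h1
  refine h2.trans ?_
  -- group walks by the number of non-loop steps
  have hmaps : ∀ p ∈ walkSet G t j i, sCount p ∈ Finset.range (t + 1) := by
    intro p _
    rw [Finset.mem_range, Nat.lt_succ_iff, sCount]
    exact le_trans (Finset.card_filter_le _ _) (by simp)
  rw [← Finset.sum_fiberwise_of_maps_to hmaps
    (fun p => (P {ω | a * t ≤ walkX t p ω}).toReal)]
  have hterm : ∀ s ∈ Finset.range (t + 1),
      ∑ p ∈ (walkSet G t j i).filter (fun p => sCount p = s),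
        (P {ω | a * t ≤ walkX t p ω}).toReal ≤ rexp (-(c * t)) := by
    intro s hsmem
    rw [Finset.mem_range, Nat.lt_succ_iff] at hsmem
    by_cases hs0 : s = 0
    · subst hs0
      have : ∀ p ∈ (walkSet G t j i).filter (fun p => sCount p = 0),
          (P {ω | a * t ≤ walkX t p ω}).toReal = 0 := by
        intro p hp
        have hz := (Finset.mem_filter.mp hp).2
        have : {ω : (ℕ × V × V) → ℝ | a * t ≤ walkX t p ω} = ∅ := by
          ext ω
          simp only [Set.mem_setOf_eq, Set.mem_empty_iff_false, iff_false, not_le]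
          rw [walkX_eq_zero hz]
          exact hat
        rw [this, measure_empty]
        rfl
      rw [Finset.sum_congr rfl this, Finset.sum_const, smul_zero]
      positivity
    · have hs1 : 1 ≤ s := Nat.one_le_iff_ne_zero.mpr hs0
      have hsR : (0:ℝ) < s := by exact_mod_cast hs1
      have hstep1 : ∀ p ∈ (walkSet G t j i).filter (fun p => sCount p = s),
          (P {ω | a * t ≤ walkX t p ω}).toReal
            ≤ rexp (-((a * t) ^ 2 / (2 * s))) := by
        intro p hp
        have hz := (Finset.mem_filter.mp hp).2
        have := chernoff_walk P hindep hlaw p (by rw [hz]; exact hs1) hat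
        rwa [hz] at this
      calc ∑ p ∈ (walkSet G t j i).filter (fun p => sCount p = s),
            (P {ω | a * t ≤ walkX t p ω}).toReal
          ≤ ∑ _p ∈ (walkSet G t j i).filter (fun p => sCount p = s),
            rexp (-((a * t) ^ 2 / (2 * s))) := Finset.sum_le_sum hstep1
      _ = (((walkSet G t j i).filter (fun p => sCount p = s)).card : ℝ)
            * rexp (-((a * t) ^ 2 / (2 * s))) := by
          rw [Finset.sum_const, nsmul_eq_mul]
      _ ≤ rexp ((t:ℝ) * binH ((s:ℝ)/t) + s * Real.log (specRad G))
            * rexp (-((a * t) ^ 2 / (2 * s))) := by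
          apply mul_le_mul_of_nonneg_right
            (card_walk_le G hV hρ ht hs1 hsmem j i) (Real.exp_nonneg _)
      _ = rexp ((t:ℝ) * binH ((s:ℝ)/t) + s * Real.log (specRad G)
            - (a * t) ^ 2 / (2 * s)) := by
          rw [← Real.exp_add]
          ring_nf
      _ ≤ rexp (-(c * t)) := Real.exp_le_exp.mpr (hexp s hs1 hsmem)
  calc ∑ s ∈ Finset.range (t + 1), ∑ p ∈ (walkSet G t j i).filter (fun p => sCount p = s),
        (P {ω | a * t ≤ walkX t p ω}).toReal
      ≤ ∑ _s ∈ Finset.range (t + 1), rexp (-(c * t)) := Finset.sum_le_sum hterm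
  _ = ((t:ℝ) + 1) * rexp (-(c * t)) := by
      rw [Finset.sum_const, Finset.card_range, nsmul_eq_mul]
      push_cast
      ring
end Prob

lemma binH_eq (p : ℝ) : binH p = Real.binEntropy p := by
  simp only [binH, Real.binEntropy, Real.log_inv]
  ring


/-- for a connected graph with at least one edge and i.i.d. standard Gaussian
noise, almost surely `limsup_{t → ∞} M_t^{(i,j)} / t ≤ sup_{β ∈ (0,1]} √(2β (H(β) + β log ρ))`. -/
theorem limsup_pathMax_le_gaussian {V : Type*} [Fintype V] [DecidableEq V]
    (G : SimpleGraph V) [DecidableRel G.Adj] (hG : G.Connected)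
    (hE : G.edgeSet.Nonempty)
    (P : Measure (ℕ × V × V → ℝ)) [IsProbabilityMeasure P]
    (hindep : ProbabilityTheory.iIndepFun
      (fun c (ω : ℕ × V × V → ℝ) => ω c) P)
    (hlaw : ∀ c : ℕ × V × V, P.map (fun ω => ω c) = gaussianReal 0 1)
    (i j : V) :
    ∀ᵐ ω ∂P, Filter.limsup (fun t : ℕ => pathMaxInf G t j i ω / t) Filter.atTop ≤
      ⨆ β : Set.Ioc (0 : ℝ) 1,
        Real.sqrt (2 * β * (binH β + (β : ℝ) * Real.log (specRad G))) := by
  classical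
  have hV : Nonempty V := hG.nonempty
  have hρ : 1 ≤ specRad G := one_le_specRad hE
  have hρ0 : (0:ℝ) < specRad G := lt_of_lt_of_le one_pos hρ
  set S : ℝ := ⨆ β : Set.Ioc (0 : ℝ) 1,
    Real.sqrt (2 * β * (binH β + (β : ℝ) * Real.log (specRad G))) with hSdef
  have hbdd : BddAbove (Set.range fun β : Set.Ioc (0:ℝ) 1 =>
      Real.sqrt (2 * (β:ℝ) * (binH β + (β:ℝ) * Real.log (specRad G)))) := by
    refine ⟨Real.sqrt (2 * (Real.log 2 + Real.log (specRad G))), ?_⟩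
    rintro y ⟨β, rfl⟩
    obtain ⟨hβ0, hβ1⟩ := β.2
    apply Real.sqrt_le_sqrt
    have h1 : binH β ≤ Real.log 2 := by rw [binH_eq]; exact Real.binEntropy_le_log_two
    have h2 : 0 ≤ binH (β:ℝ) := by
      rw [binH_eq]; exact Real.binEntropy_nonneg hβ0.le hβ1
    have h3 := Real.log_nonneg hρ
    nlinarith [mul_nonneg hβ0.le h3]
  have hS0 : 0 ≤ S := Real.iSup_nonneg fun _ => Real.sqrt_nonneg _
  have hkey : ∀ β : ℝ, 0 < β → β ≤ 1 →
      binH β + β * Real.log (specRad G) ≤ S^2 / (2*β) := by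
    intro β hβ0 hβ1
    have hc0 : 0 ≤ binH β + β * Real.log (specRad G) := by
      have h2 : 0 ≤ binH β := by
        rw [binH_eq]; exact Real.binEntropy_nonneg hβ0.le hβ1
      have h3 := Real.log_nonneg hρ
      nlinarith [mul_nonneg hβ0.le h3]
    have hle : Real.sqrt (2 * β * (binH β + β * Real.log (specRad G))) ≤ S :=
      le_ciSup hbdd (⟨β, hβ0, hβ1⟩ : Set.Ioc (0:ℝ) 1)
    have hsq : 2 * β * (binH β + β * Real.log (specRad G)) ≤ S^2 := by
      have hp := pow_le_pow_left₀ (Real.sqrt_nonneg _) hle 2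
      rwa [Real.sq_sqrt (by positivity)] at hp
    rw [le_div_iff₀ (by positivity)]
    linear_combination hsq
  have main : ∀ n : ℕ, ∀ᵐ ω ∂P,
      Filter.limsup (fun t : ℕ => pathMaxInf G t j i ω / t) Filter.atTop
        ≤ S + 1/(n+1) := by
    intro n
    set ε : ℝ := 1/(n+1) with hεdef
    have hε : 0 < ε := by positivity
    set a : ℝ := S + ε with hadef
    have ha : 0 < a := by linarith
    set c : ℝ := (a^2 - S^2)/2 with hcdef
    have hc : 0 < c := by
      rw [hcdef, hadef]
      nlinarith [mul_nonneg hS0 hε.le, mul_pos hε hε]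
    have hexp : ∀ t : ℕ, 1 ≤ t → ∀ s : ℕ, 1 ≤ s → s ≤ t →
        (t:ℝ) * binH ((s:ℝ)/t) + s * Real.log (specRad G) - (a*t)^2/(2*s) ≤ -(c*t) := by
      intro t ht s hs1 hst
      have ht0 : (0:ℝ) < t := by exact_mod_cast ht
      have hs0 : (0:ℝ) < s := by exact_mod_cast hs1
      have hstR : (s:ℝ) ≤ t := by exact_mod_cast hst
      have hβ0 : 0 < (s:ℝ)/t := by positivity
      have hβ1 : (s:ℝ)/t ≤ 1 := by rw [div_le_one ht0]; exact hstR
      have hk := hkey _ hβ0 hβ1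
      have hts : (t:ℝ) * ((s:ℝ)/t) = s := by field_simp
      have h1 : (t:ℝ) * binH ((s:ℝ)/t) + s * Real.log (specRad G)
          ≤ S^2 * t^2/(2*s) := by
        have h2 : (t:ℝ) * (binH ((s:ℝ)/t) + ((s:ℝ)/t) * Real.log (specRad G))
            ≤ (t:ℝ) * (S^2/(2*((s:ℝ)/t))) := mul_le_mul_of_nonneg_left hk ht0.le
        have h3 : (t:ℝ) * (binH ((s:ℝ)/t) + ((s:ℝ)/t) * Real.log (specRad G))
            = t * binH ((s:ℝ)/t) + s * Real.log (specRad G) := by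
          rw [mul_add, ← mul_assoc, hts]
        have h4 : (t:ℝ) * (S^2/(2*((s:ℝ)/t))) = S^2*t^2/(2*s) := by
          field_simp
        linarith
      have hca : a^2 - S^2 = 2*c := by rw [hcdef]; ring
      have h5 : c * t ≤ ((a*t)^2 - S^2*t^2)/(2*s) := by
        rw [le_div_iff₀ (by positivity)]
        nlinarith [mul_nonneg (mul_nonneg hc.le ht0.le) (sub_nonneg.mpr hstR)]
      have h6 : S^2*t^2/(2*s) - (a*t)^2/(2*s) = -(((a*t)^2 - S^2*t^2)/(2*s)) := by
        ring
      linarith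
    have hPB : ∀ t : ℕ, (P {ω | a * t ≤ pathMaxInf G t j i ω}).toReal
        ≤ ((t:ℝ)+1) * Real.exp (-(c*t)) := by
      intro t
      rcases Nat.eq_zero_or_pos t with rfl | ht
      · have h1 : (P {ω | a * (0:ℕ) ≤ pathMaxInf G 0 j i ω}).toReal ≤ 1 := by
          have := prob_le_one (μ := P) (s := {ω | a * (0:ℕ) ≤ pathMaxInf G 0 j i ω})
          simpa using ENNReal.toReal_mono ENNReal.one_ne_top this
        simpa using h1
      · exact prob_bound P G hindep hlaw hV hρ j i ha ht (hexp t ht)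
    -- summability
    set b : ℕ → ℝ := fun t => ((t:ℝ)+1) * Real.exp (-(c*t)) with hbdef
    have hbnn : ∀ t, 0 ≤ b t := fun t => by positivity
    have hform : ∀ t : ℕ, b t = ((t:ℝ)+1) * (Real.exp (-c))^t := by
      intro t
      rw [hbdef, ← Real.exp_nat_mul, mul_comm ((t:ℝ)) (-c), neg_mul]
    have hr1 : Real.exp (-c) < 1 := Real.exp_lt_one_iff.mpr (by linarith)
    have hrnorm : ‖Real.exp (-c)‖ < 1 := by
      rwa [Real.norm_eq_abs, abs_of_pos (Real.exp_pos _)]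
    have hsum : Summable b := by
      have h1 : Summable (fun t : ℕ => (t:ℝ) * (Real.exp (-c))^t) := by
        simpa using summable_pow_mul_geometric_of_norm_lt_one 1 hrnorm
      have h2 : Summable (fun t : ℕ => (Real.exp (-c))^t) :=
        summable_geometric_of_lt_one (Real.exp_pos _).le hr1
      refine Summable.congr (h1.add h2) ?_
      intro t
      rw [hform t]
      ring
    have hne : ∑' t : ℕ, P {ω | a * t ≤ pathMaxInf G t j i ω} ≠ ⊤ := by
      have hcalc : ∑' t : ℕ, P {ω | a * t ≤ pathMaxInf G t j i ω}
          ≤ ENNReal.ofReal (∑' t, b t) := by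
        rw [ENNReal.ofReal_tsum_of_nonneg hbnn hsum]
        refine ENNReal.tsum_le_tsum ?_
        intro t
        calc P {ω | a * t ≤ pathMaxInf G t j i ω}
            = ENNReal.ofReal ((P {ω | a * t ≤ pathMaxInf G t j i ω}).toReal) :=
              (ENNReal.ofReal_toReal (measure_ne_top _ _)).symm
        _ ≤ ENNReal.ofReal (b t) := ENNReal.ofReal_le_ofReal (hPB t)
      exact ne_of_lt (lt_of_le_of_lt hcalc ENNReal.ofReal_lt_top)
    have hBC : P (Filter.limsup
        (fun t : ℕ => {ω | a * t ≤ pathMaxInf G t j i ω}) Filter.atTop) = 0 :=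
      measure_limsup_atTop_eq_zero hne
    have hae := measure_eq_zero_iff_ae_notMem.mp hBC
    filter_upwards [hae] with ω hω
    rw [mem_limsup_iff_frequently_mem, Filter.not_frequently] at hω
    have hev : ∀ᶠ t : ℕ in Filter.atTop, pathMaxInf G t j i ω / t ≤ a := by
      filter_upwards [hω, Filter.eventually_gt_atTop 0] with t hνt ht0
      have ht0' : (0:ℝ) < t := by exact_mod_cast ht0
      rw [div_le_iff₀ ht0']
      simp only [Set.mem_setOf_eq, not_le] at hνt
      linarith
    rw [Filter.limsup_eq]
    by_cases hbd : BddBelow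
        {x : ℝ | ∀ᶠ t : ℕ in Filter.atTop, pathMaxInf G t j i ω / t ≤ x}
    · exact csInf_le hbd hev
    · rw [Real.sInf_of_not_bddBelow hbd]
      linarith
  have hall := MeasureTheory.ae_all_iff.mpr main
  filter_upwards [hall] with ω hω
  by_contra hlt
  push_neg at hlt
  obtain ⟨n, hn⟩ := exists_nat_one_div_lt (sub_pos.mpr hlt)
  have h1 := hω n
  linarith
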